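/- arXiv:1608.03551 — 4 statements merged into one kernel-verified Lean document; each statement's English description precedes it below -/
import Mathlib

section
/- Let G be a graph on n vertices with characteristic polynomial φ_G(x) (of its adjacency matrix). Then the characteristic polynomial of the extended bipartite double graph Ĝ satisfies φ_{Ĝ}(x) = (-1)^n · φ_G(x−1) · φ_G(−x−1). -/
open Polynomial Matrix SimpleGraph

/-- The extended bipartite double graph of `G`: two copies of `V`, with `(i, b)`
adjacent to `(j, c)` iff the copies are distinct and either `i ~ j` in `G` or
`i = j` (the latter giving the extra edges `i i'`). -/
def extendedBipartiteDouble {V : Type*} (G : SimpleGraph V) :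
    SimpleGraph (V × Bool) where
  Adj a b := (G.Adj a.1 b.1 ∨ a.1 = b.1) ∧ a.2 ≠ b.2
  symm := ⟨fun a b h => ⟨h.1.imp (fun h' => h'.symm) (fun h' => h'.symm), h.2.symm⟩⟩
  loopless := ⟨fun a h => h.2 rfl⟩

instance {V : Type*} (G : SimpleGraph V) [DecidableEq V] [DecidableRel G.Adj] :
    DecidableRel (extendedBipartiteDouble G).Adj :=
  fun a b => inferInstanceAs (Decidable ((G.Adj a.1 b.1 ∨ a.1 = b.1) ∧ a.2 ≠ b.2))

private lemma det_fromBlocks_PQQP {n : ℕ} {R : Type*} [CommRing R]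
    (P Q : Matrix (Fin n) (Fin n) R) :
    (Matrix.fromBlocks P Q Q P).det = (P + Q).det * (P - Q).det := by
  have h : fromBlocks 1 1 0 1 * fromBlocks P Q Q P * fromBlocks 1 (-1) 0 1
      = fromBlocks (P + Q) 0 Q (P - Q) := by
    simp [Matrix.fromBlocks_multiply]
    refine ⟨?_, ?_⟩ <;> first | trivial | abel
  have h2 := congrArg Matrix.det h
  rw [det_mul, det_mul, det_fromBlocks_zero₂₁, det_fromBlocks_zero₂₁,
    det_fromBlocks_zero₁₂] at h2
  simpa using h2

private lemma charmatrix_map_aeval {n : ℕ} (A : Matrix (Fin n) (Fin n) ℝ)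
    (q : ℝ[X]) :
    (Matrix.charmatrix A).map ((Polynomial.aeval q).toRingHom : ℝ[X] →+* ℝ[X]) =
      Matrix.scalar (Fin n) q - (Polynomial.C : ℝ →+* ℝ[X]).mapMatrix A := by
  ext i j
  by_cases h : i = j
  · subst h
    simp [Matrix.charmatrix_apply_eq, Matrix.scalar_apply]
  · simp [Matrix.charmatrix_apply_ne _ _ _ h, Matrix.scalar_apply,
      Matrix.diagonal_apply_ne _ h]

private lemma charpoly_comp_aeval {n : ℕ} (A : Matrix (Fin n) (Fin n) ℝ)
    (q : ℝ[X]) :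
    A.charpoly.comp q =
      (Matrix.scalar (Fin n) q - (Polynomial.C : ℝ →+* ℝ[X]).mapMatrix A).det := by
  rw [Polynomial.comp_eq_aeval, Matrix.charpoly,
    ← charmatrix_map_aeval A q]
  exact RingHom.map_det ((Polynomial.aeval q).toRingHom : ℝ[X] →+* ℝ[X]) _

/-- The characteristic polynomial of the extended bipartite double graph `Ĝ` of
a graph `G` on `n` vertices satisfies `φ_{Ĝ}(x) = (-1)^n · φ_G(x-1) · φ_G(-x-1)`. -/
theorem charpoly_extendedBipartiteDouble (n : ℕ) (G : SimpleGraph (Fin n))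
    [DecidableRel G.Adj] :
    ((extendedBipartiteDouble G).adjMatrix ℝ).charpoly =
      (-1 : ℝ[X]) ^ n * ((G.adjMatrix ℝ).charpoly.comp (X - 1)) *
        ((G.adjMatrix ℝ).charpoly.comp (-X - 1)) := by
  classical
  set A : Matrix (Fin n) (Fin n) ℝ := G.adjMatrix ℝ with hA
  let e : Fin n × Bool ≃ Fin n ⊕ Fin n :=
    { toFun := fun p => if p.2 then Sum.inr p.1 else Sum.inl p.1
      invFun := Sum.elim (fun i => (i, false)) (fun i => (i, true))
      left_inv := fun p => by rcases p with ⟨i, _ | _⟩ <;> rfl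
      right_inv := fun s => by rcases s with i | i <;> rfl }
  have hre : Matrix.reindex e e ((extendedBipartiteDouble G).adjMatrix ℝ) =
      Matrix.fromBlocks 0 (A + 1) (A + 1) 0 := by
    ext i j
    rcases i with i | i <;> rcases j with j | j <;>
      by_cases h : i = j <;>
      simp [e, Matrix.one_apply, h, extendedBipartiteDouble, SimpleGraph.adjMatrix,
        Matrix.of_apply, hA]
  have h1 : ((extendedBipartiteDouble G).adjMatrix ℝ).charpoly =
      (Matrix.fromBlocks (0 : Matrix (Fin n) (Fin n) ℝ) (A + 1) (A + 1) 0).charpoly := by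
    rw [← hre, Matrix.charpoly_reindex]
  rw [h1, Matrix.charpoly, Matrix.charmatrix_fromBlocks,
    det_fromBlocks_PQQP]
  have hB : ((A + 1).map (Polynomial.C : ℝ → ℝ[X])) =
      (Polynomial.C : ℝ →+* ℝ[X]).mapMatrix A + 1 := by
    ext i j
    by_cases h : i = j <;>
      simp [Matrix.one_apply, h]
  have hch0 : Matrix.charmatrix (0 : Matrix (Fin n) (Fin n) ℝ) =
      Matrix.scalar (Fin n) (X : ℝ[X]) := by
    simp [Matrix.charmatrix]
  have hplus : Matrix.charmatrix (0 : Matrix (Fin n) (Fin n) ℝ) +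
      -((A + 1).map (Polynomial.C : ℝ → ℝ[X])) =
      Matrix.scalar (Fin n) (X - 1 : ℝ[X]) - (Polynomial.C : ℝ →+* ℝ[X]).mapMatrix A := by
    rw [hch0, hB, map_sub]
    simp only [_root_.map_one]
    abel
  have hminus : Matrix.charmatrix (0 : Matrix (Fin n) (Fin n) ℝ) -
      -((A + 1).map (Polynomial.C : ℝ → ℝ[X])) =
      -(Matrix.scalar (Fin n) (-X - 1 : ℝ[X]) - (Polynomial.C : ℝ →+* ℝ[X]).mapMatrix A) := by
    rw [hch0, hB, map_sub, map_neg]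
    simp only [_root_.map_one]
    abel
  rw [hplus, hminus, Matrix.det_neg, ← charpoly_comp_aeval, ← charpoly_comp_aeval]
  simp only [Fintype.card_fin]
  ring
end

section
/- Let G be a graph on n vertices with spectrum {λ_0^{m_0}, λ_1^{m_1}, …, λ_d^{m_d}}. Then the spectrum of the extended bipartite double graph Ĝ is {±(1+λ_0)^{m_0}, ±(1+λ_1)^{m_1}, …, ±(1+λ_d)^{m_d}}; that is, μ is an eigenvalue of Ĝ with multiplicity m exactly when μ = 1+λ or μ = −(1+λ) for an eigenvalue λ of G of multiplicity m (multiplicities of coinciding values being added). -/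
open Polynomial Matrix SimpleGraph

/- ### Auxiliary lemmas about roots of composed polynomials -/

lemma aux_rootMultiplicity_comp_X_add_C (p : ℝ[X]) (t s : ℝ) :
    (p.comp (X + C t)).rootMultiplicity s = p.rootMultiplicity (s + t) := by
  have hq : (X + C t).comp (X + C s) = X + C (s + t) := by
    rw [add_comp, X_comp, C_comp, add_assoc, ← C_add]
  rw [rootMultiplicity_eq_rootMultiplicity (p := p.comp (X + C t)) (t := s),
    comp_assoc, hq, rootMultiplicity_eq_rootMultiplicity (p := p) (t := s + t)]

lemma aux_rootMultiplicity_comp_neg_X (p : ℝ[X]) (s : ℝ) :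
    (p.comp (-X)).rootMultiplicity s = p.rootMultiplicity (-s) := by
  classical
  by_cases hp : p = 0
  · simp [hp]
  have hc : p.comp (-X) ≠ 0 := fun h => hp (by
    have := congrArg (fun q : ℝ[X] => q.comp (-X)) h
    simpa [comp_neg_X_comp_neg_X] using this)
  rw [rootMultiplicity_eq_multiplicity, rootMultiplicity_eq_multiplicity,
    if_neg hp, if_neg hc]
  have hassoc : Associated (-(X - C s)) (X - C s) := ⟨-1, by simp⟩
  rw [multiplicity_eq_of_associated_left hassoc]
  have := multiplicity_map_eq (algEquivAevalNegX (R := ℝ)) (a := X - C (-s)) (b := p)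
  have h1 : (algEquivAevalNegX (R := ℝ)) (X - C (-s)) = -(X - C s) := by
    simp [algEquivAevalNegX, ← comp_eq_aeval, sub_comp, neg_sub]
    ring
  have h2 : (algEquivAevalNegX (R := ℝ)) p = p.comp (-X) := by
    simp [algEquivAevalNegX, ← comp_eq_aeval]
  rw [h1, h2] at this
  exact this

lemma aux_roots_comp_X_add_C (p : ℝ[X]) (t : ℝ) :
    (p.comp (X + C t)).roots = p.roots.map (fun x => x - t) := by
  classical
  ext a
  have hinj : Function.Injective (fun x : ℝ => x - t) := fun x y h => by
    simpa using congrArg (· + t) h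
  have : a = (fun x : ℝ => x - t) (a + t) := by simp
  rw [this, Multiset.count_map_eq_count' _ _ hinj, count_roots, count_roots,
    aux_rootMultiplicity_comp_X_add_C]
  congr 1
  ring

lemma aux_roots_comp_neg_X (p : ℝ[X]) :
    (p.comp (-X)).roots = p.roots.map (fun x => -x) := by
  classical
  ext a
  have hinj : Function.Injective (fun x : ℝ => -x) := fun x y h => by simpa using h
  have : a = (fun x : ℝ => -x) (-a) := by simp
  rw [this, Multiset.count_map_eq_count' _ _ hinj, count_roots, count_roots,
    aux_rootMultiplicity_comp_neg_X]
  simp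

/- ### Determinant of a symmetric block matrix -/

lemma aux_det_fromBlocks_symm {R : Type*} [CommRing R] {m : Type*} [DecidableEq m]
    [Fintype m] (P Q : Matrix m m R) :
    (fromBlocks P Q Q P).det = (P + Q).det * (P - Q).det := by
  have e12 : P * -1 + Q * -1 + (Q * 1 + P * 1) = (0 : Matrix m m R) := by
    simp
  have key : fromBlocks (1 : Matrix m m R) 1 0 1 * fromBlocks P Q Q P *
      fromBlocks 1 (-1) 0 1 = fromBlocks (P + Q) 0 Q (P - Q) := by
    rw [fromBlocks_multiply, fromBlocks_multiply]
    have h11 : (1 : Matrix m m R) * P + 1 * Q = P + Q := by simp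
    have h12 : (1 : Matrix m m R) * Q + 1 * P = Q + P := by simp
    have h21 : (0 : Matrix m m R) * P + 1 * Q = Q := by simp
    have h22 : (0 : Matrix m m R) * Q + 1 * P = P := by simp
    rw [h11, h12, h21, h22]
    have g11 : (P + Q) * 1 + (Q + P) * 0 = P + Q := by simp
    have g12 : (P + Q) * -1 + (Q + P) * 1 = (0 : Matrix m m R) := by
      simp [Matrix.mul_neg]; abel
    have g21 : Q * 1 + P * 0 = Q := by simp
    have g22 : Q * -1 + P * 1 = P - Q := by simp [Matrix.mul_neg]; abel
    rw [g11, g12, g21, g22]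
  have hdet := congrArg Matrix.det key
  rw [det_mul, det_mul, det_fromBlocks_zero₂₁, det_fromBlocks_zero₂₁,
    det_fromBlocks_zero₁₂] at hdet
  simpa using hdet

/- ### Charpoly of shifted and negated matrices -/

lemma aux_charmatrix_map_aeval {m : Type*} [DecidableEq m] [Fintype m]
    (A : Matrix m m ℝ) (q : ℝ[X]) :
    (charmatrix A).map (aeval q : ℝ[X] →ₐ[ℝ] ℝ[X]) =
      Matrix.scalar m q - A.map C := by
  ext i j
  by_cases h : i = j <;>
    simp [h, charmatrix, Matrix.map_apply, Matrix.scalar_apply, diagonal,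
      Matrix.one_apply, C_eq_algebraMap]

lemma aux_charpoly_comp {m : Type*} [DecidableEq m] [Fintype m]
    (A : Matrix m m ℝ) (q : ℝ[X]) :
    A.charpoly.comp q = (Matrix.scalar m q - A.map C).det := by
  rw [Matrix.charpoly, comp_eq_aeval, ← aux_charmatrix_map_aeval A q]
  simpa using
    RingHom.map_det ((aeval q : ℝ[X] →ₐ[ℝ] ℝ[X]).toRingHom) (charmatrix A)

/-- If `G` has spectrum `{λ_0^{m_0}, …, λ_d^{m_d}}`, then the spectrum of the
extended bipartite double graph `Ĝ` is `{±(1+λ_0)^{m_0}, …, ±(1+λ_d)^{m_d}}`: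
the multiset of eigenvalues of `Ĝ` is obtained from that of `G` by taking
`1 + λ` and `-(1 + λ)` for each eigenvalue `λ` of `G` (with multiplicities,
multiplicities of coinciding values being added). -/
theorem spectrum_extendedBipartiteDouble (n : ℕ) (G : SimpleGraph (Fin n))
    [DecidableRel G.Adj] :
    ((extendedBipartiteDouble G).adjMatrix ℝ).charpoly.roots =
      (G.adjMatrix ℝ).charpoly.roots.map (fun x => 1 + x) +
        (G.adjMatrix ℝ).charpoly.roots.map (fun x => -(1 + x)) := by
  classical
  set A : Matrix (Fin n) (Fin n) ℝ := G.adjMatrix ℝ with hA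
  set B : Matrix (Fin n) (Fin n) ℝ := A + 1 with hB
  -- Step 1: reindex the adjacency matrix of the extended bipartite double
  set e : Fin n × Bool ≃ Fin n ⊕ Fin n :=
    (Equiv.prodComm (Fin n) Bool).trans (Equiv.boolProdEquivSum (Fin n)) with he
  have hreindex : reindex e e ((extendedBipartiteDouble G).adjMatrix ℝ) =
      fromBlocks 0 B B 0 := by
    ext i j
    rcases i with i | i <;> rcases j with j | j <;>
      simp [he, Equiv.boolProdEquivSum, adjMatrix_apply, hB, hA,
        Matrix.one_apply, Matrix.add_apply] <;>
      by_cases hij : i = j <;>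
      simp [hij, extendedBipartiteDouble]
  -- Step 2: charpoly of the block matrix
  have hcp : ((extendedBipartiteDouble G).adjMatrix ℝ).charpoly =
      B.charpoly * (-B).charpoly := by
    rw [← charpoly_reindex e, hreindex, Matrix.charpoly, charmatrix_fromBlocks]
    have h0 : charmatrix (0 : Matrix (Fin n) (Fin n) ℝ) =
        Matrix.scalar (Fin n) (X : ℝ[X]) := by
      ext i j; by_cases h : i = j <;> simp [h, charmatrix]
    rw [h0, aux_det_fromBlocks_symm]
    have hP1 : Matrix.scalar (Fin n) (X : ℝ[X]) + -(B.map C) = charmatrix B := by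
      ext i j
      by_cases h : i = j <;>
        simp [h, charmatrix, diagonal, Matrix.map_apply, sub_eq_add_neg] <;> ring
    have hP2 : Matrix.scalar (Fin n) (X : ℝ[X]) - -(B.map C) = charmatrix (-B) := by
      ext i j
      by_cases h : i = j <;>
        simp [h, charmatrix, diagonal, Matrix.map_apply, sub_eq_add_neg,
          Matrix.neg_apply] <;> ring
    rw [hP1, hP2]
    rfl
  -- Step 3: roots of charpoly B
  have hBroots : B.charpoly.roots = A.charpoly.roots.map (fun x => 1 + x) := by
    have hshift : A.charpoly.comp (X + C (-1)) = B.charpoly := by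
      rw [aux_charpoly_comp, Matrix.charpoly]
      congr 1
      ext i j
      by_cases h : i = j <;>
        simp [h, charmatrix, diagonal, Matrix.map_apply, hB, Matrix.add_apply,
          Matrix.one_apply, sub_sub] <;> ring
    rw [← hshift, aux_roots_comp_X_add_C]
    exact Multiset.map_congr rfl (fun x _ => by ring)
  -- Step 4: roots of charpoly (-B)
  have hnegBroots : (-B).charpoly.roots = A.charpoly.roots.map (fun x => -(1 + x)) := by
    have hcompneg : B.charpoly.comp (-X) = (-1 : ℝ[X]) ^ n * (-B).charpoly := by
      rw [aux_charpoly_comp]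
      have h2 : Matrix.scalar (Fin n) (-X : ℝ[X]) - B.map C = -(charmatrix (-B)) := by
        ext i j
        by_cases h : i = j <;>
          simp [h, charmatrix, diagonal, Matrix.map_apply, Matrix.neg_apply] <;> ring
      rw [h2, Matrix.det_neg, Matrix.charpoly, Fintype.card_fin]
    have hroots : ((-1 : ℝ[X]) ^ n * (-B).charpoly).roots = (-B).charpoly.roots := by
      have hsmul : (-1 : ℝ[X]) ^ n * (-B).charpoly = ((-1 : ℝ) ^ n) • (-B).charpoly := by
        simp [Polynomial.smul_eq_C_mul]
      rw [hsmul, roots_smul_nonzero]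
      exact pow_ne_zero _ (by norm_num)
    rw [← hroots, ← hcompneg, aux_roots_comp_neg_X, hBroots, Multiset.map_map]
    exact Multiset.map_congr rfl (fun x _ => by simp)
  -- Conclude
  rw [hcp, roots_mul (mul_ne_zero (charpoly_monic B).ne_zero (charpoly_monic (-B)).ne_zero),
    hBroots, hnegBroots]
end

section
/- For every k ≥ 2, the middle cube graph MQ_k is isomorphic to the bipartite double graph of the odd graph O_k, via the map sending a vertex u of O_k (a (k−1)-subset of [2k−1]) in the first copy to the vertex of MQ_k with characteristic vector of u, and a vertex u' in the second copy to the vertex with characteristic vector of the complement of u in [2k−1]. -/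
open Finset SimpleGraph

/-- The `n`-cube: vertices are binary strings of length `n`, two being adjacent
iff they differ in exactly one coordinate. -/
def Qcube (n : ℕ) : SimpleGraph (Fin n → Bool) where
  Adj x y := (Finset.univ.filter fun i => x i ≠ y i).card = 1
  symm := by
    constructor
    intro x y h
    simpa [ne_comm] using h
  loopless := by
    constructor
    intro x h
    simp at h

/-- The Hamming weight of a binary string: its number of ones. -/
def wt {n : ℕ} (x : Fin n → Bool) : ℕ := (Finset.univ.filter fun i => x i = true).card

/-- The middle cube graph `MQ_k`: the subgraph of `Q_{2k-1}` induced by the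
vertices of Hamming weight `k-1` or `k`. -/
def middleCube (k : ℕ) :
    SimpleGraph {x : Fin (2 * k - 1) → Bool // wt x = k - 1 ∨ wt x = k} :=
  SimpleGraph.comap Subtype.val (Qcube (2 * k - 1))

/-- The odd graph `O_k` (for `k ≥ 2`): vertices are the `(k-1)`-subsets of
`[2k-1]`, two being adjacent iff they are disjoint. -/
def oddGraph (k : ℕ) (hk : 2 ≤ k) :
    SimpleGraph {s : Finset (Fin (2 * k - 1)) // s.card = k - 1} where
  Adj s t := Disjoint s.1 t.1
  symm := ⟨fun s t h => h.symm⟩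
  loopless := by
    constructor
    intro s h
    have h1 : s.1 = ∅ := disjoint_self.mp h
    have h2 := s.2
    rw [h1, Finset.card_empty] at h2
    omega

/-- The bipartite double graph of `G`; `(i, false)` plays the role of the
vertex `i` and `(i, true)` that of the duplicated vertex `i'`. -/
def bipartiteDouble {V : Type*} (G : SimpleGraph V) : SimpleGraph (V × Bool) where
  Adj a b := G.Adj a.1 b.1 ∧ a.2 ≠ b.2
  symm := ⟨fun a b h => ⟨h.1.symm, h.2.symm⟩⟩
  loopless := ⟨fun a h => h.2 rfl⟩

section AuxMCB

variable {n : ℕ} (s t : Finset (Fin n))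

lemma aux_wt_ind : wt (fun i => decide (i ∈ s)) = s.card := by
  unfold wt; congr 1; ext i; simp

lemma aux_wt_compl : wt (fun i => decide (i ∉ s)) = n - s.card := by
  unfold wt
  have : (Finset.univ.filter fun i => decide (i ∉ s) = true) = sᶜ := by ext i; simp
  rw [this, Finset.card_compl, Fintype.card_fin]

lemma aux_same : (Finset.univ.filter fun i => decide (i ∈ s) ≠ decide (i ∈ t))
    = (s \ t) ∪ (t \ s) := by
  ext i
  simp only [Finset.mem_filter, Finset.mem_univ, true_and, Finset.mem_union, Finset.mem_sdiff,
    ne_eq, decide_eq_decide]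
  tauto

lemma aux_same' : (Finset.univ.filter fun i => decide (i ∉ s) ≠ decide (i ∉ t))
    = (s \ t) ∪ (t \ s) := by
  ext i
  simp only [Finset.mem_filter, Finset.mem_univ, true_and, Finset.mem_union, Finset.mem_sdiff,
    ne_eq, decide_eq_decide]
  tauto

lemma aux_mixed : (Finset.univ.filter fun i => decide (i ∈ s) ≠ decide (i ∉ t))
    = ((s \ t) ∪ (t \ s))ᶜ := by
  ext i
  simp only [Finset.mem_filter, Finset.mem_univ, true_and, Finset.mem_compl,
    Finset.mem_union, Finset.mem_sdiff, ne_eq, decide_eq_decide]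
  tauto

lemma aux_mixed' : (Finset.univ.filter fun i => decide (i ∉ s) ≠ decide (i ∈ t))
    = ((s \ t) ∪ (t \ s))ᶜ := by
  ext i
  simp only [Finset.mem_filter, Finset.mem_univ, true_and, Finset.mem_compl,
    Finset.mem_union, Finset.mem_sdiff, ne_eq, decide_eq_decide]
  tauto

lemma aux_card_sd : ((s \ t) ∪ (t \ s)).card + 2 * (s ∩ t).card = s.card + t.card := by
  rw [Finset.card_union_of_disjoint (disjoint_sdiff_sdiff)]
  have h1 := Finset.card_sdiff_add_card_inter s t
  have h2 := Finset.card_sdiff_add_card_inter t s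
  rw [Finset.inter_comm t s] at h2
  omega

lemma aux_card_le : ((s \ t) ∪ (t \ s)).card ≤ n := by
  simpa using Finset.card_le_univ ((s \ t) ∪ (t \ s))

end AuxMCB

/-- For `k ≥ 2`, the middle cube graph `MQ_k` is isomorphic to the bipartite
double graph of the odd graph `O_k`, via the map sending a vertex `u` of `O_k`
in the first copy to the characteristic vector of `u`, and a vertex `u'` of the
second copy to the characteristic vector of the complement of `u` in `[2k-1]`. -/
theorem middleCube_iso_bipartiteDouble_oddGraph (k : ℕ) (hk : 2 ≤ k) :
    ∃ f : {s : Finset (Fin (2 * k - 1)) // s.card = k - 1} × Bool →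
          {x : Fin (2 * k - 1) → Bool // wt x = k - 1 ∨ wt x = k},
      (∀ s, (f (s, false)).1 = fun i => decide (i ∈ s.1)) ∧
      (∀ s, (f (s, true)).1 = fun i => decide (i ∉ s.1)) ∧
      Function.Bijective f ∧
      (∀ a b, (bipartiteDouble (oddGraph k hk)).Adj a b ↔
        (middleCube k).Adj (f a) (f b)) := by
  refine ⟨fun a => if a.2 then
      ⟨fun i => decide (i ∉ a.1.1), Or.inr (by rw [aux_wt_compl, a.1.2]; omega)⟩
    else
      ⟨fun i => decide (i ∈ a.1.1), Or.inl (by rw [aux_wt_ind, a.1.2])⟩,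
    fun s => rfl, fun s => rfl, ⟨?_, ?_⟩, ?_⟩
  · -- injective
    rintro ⟨⟨s, hs⟩, (_|_)⟩ ⟨⟨t, ht⟩, (_|_)⟩ hab
    · have hv : (fun i : Fin (2 * k - 1) => decide (i ∈ s)) = fun i => decide (i ∈ t) :=
        congrArg Subtype.val hab
      have hst : s = t := by
        ext i
        have := congrFun hv i
        simpa using this
      subst hst; rfl
    · exfalso
      have hv : (fun i : Fin (2 * k - 1) => decide (i ∈ s)) = fun i => decide (i ∉ t) :=
        congrArg Subtype.val hab
      have h1 := aux_wt_ind s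
      rw [hv, aux_wt_compl, ht] at h1
      rw [hs] at h1
      omega
    · exfalso
      have hv : (fun i : Fin (2 * k - 1) => decide (i ∉ s)) = fun i => decide (i ∈ t) :=
        congrArg Subtype.val hab
      have h1 := aux_wt_compl s
      rw [hv, aux_wt_ind, ht] at h1
      rw [hs] at h1
      omega
    · have hv : (fun i : Fin (2 * k - 1) => decide (i ∉ s)) = fun i => decide (i ∉ t) :=
        congrArg Subtype.val hab
      have hst : s = t := by
        ext i
        have := congrFun hv i
        simpa using this
      subst hst; rfl
  · -- surjective
    rintro ⟨x, hx⟩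
    rcases hx with h | h
    · refine ⟨(⟨Finset.univ.filter fun i => x i = true, h⟩, false), Subtype.ext (funext fun i => ?_)⟩
      simp
    · have hc : (Finset.univ.filter fun i => x i = false).card = k - 1 := by
        have he : (Finset.univ.filter fun i => x i = false)
            = (Finset.univ.filter fun i => x i = true)ᶜ := by
          ext i; simp
        rw [he, Finset.card_compl, Fintype.card_fin]
        unfold wt at h
        omega
      refine ⟨(⟨Finset.univ.filter fun i => x i = false, hc⟩, true), Subtype.ext (funext fun i => ?_)⟩
      simp
  · -- adjacency
    rintro ⟨⟨s, hs⟩, (_|_)⟩ ⟨⟨t, ht⟩, (_|_)⟩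
    · constructor
      · rintro ⟨-, hne⟩; exact absurd rfl hne
      · intro h1
        exfalso
        have h1' : (Finset.univ.filter fun i =>
            (decide (i ∈ s) : Bool) ≠ decide (i ∈ t)).card = 1 := h1
        rw [aux_same] at h1'
        have h2 := aux_card_sd s t
        rw [hs, ht] at h2
        omega
    · constructor
      · rintro ⟨hd, -⟩
        show (Finset.univ.filter fun i => (decide (i ∈ s) : Bool) ≠ decide (i ∉ t)).card = 1
        rw [aux_mixed, Finset.card_compl, Fintype.card_fin]
        have h2 := aux_card_sd s t
        rw [hs, ht] at h2
        have hm : (s ∩ t).card = 0 :=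
          Finset.card_eq_zero.mpr (Finset.disjoint_iff_inter_eq_empty.mp hd)
        omega
      · intro h1
        have h1' : (Finset.univ.filter fun i =>
            (decide (i ∈ s) : Bool) ≠ decide (i ∉ t)).card = 1 := h1
        rw [aux_mixed, Finset.card_compl, Fintype.card_fin] at h1'
        have h2 := aux_card_sd s t
        rw [hs, ht] at h2
        have h3 := aux_card_le s t
        have hm : (s ∩ t).card = 0 := by omega
        exact ⟨Finset.disjoint_iff_inter_eq_empty.mpr (Finset.card_eq_zero.mp hm),
          Bool.false_ne_true⟩
    · constructor
      · rintro ⟨hd, -⟩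
        show (Finset.univ.filter fun i => (decide (i ∉ s) : Bool) ≠ decide (i ∈ t)).card = 1
        rw [aux_mixed', Finset.card_compl, Fintype.card_fin]
        have h2 := aux_card_sd s t
        rw [hs, ht] at h2
        have hm : (s ∩ t).card = 0 :=
          Finset.card_eq_zero.mpr (Finset.disjoint_iff_inter_eq_empty.mp hd)
        omega
      · intro h1
        have h1' : (Finset.univ.filter fun i =>
            (decide (i ∉ s) : Bool) ≠ decide (i ∈ t)).card = 1 := h1
        rw [aux_mixed', Finset.card_compl, Fintype.card_fin] at h1'
        have h2 := aux_card_sd s t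
        rw [hs, ht] at h2
        have h3 := aux_card_le s t
        have hm : (s ∩ t).card = 0 := by omega
        exact ⟨Finset.disjoint_iff_inter_eq_empty.mpr (Finset.card_eq_zero.mp hm),
          fun h => Bool.false_ne_true h.symm⟩
    · constructor
      · rintro ⟨-, hne⟩; exact absurd rfl hne
      · intro h1
        exfalso
        have h1' : (Finset.univ.filter fun i =>
            (decide (i ∉ s) : Bool) ≠ decide (i ∉ t)).card = 1 := h1
        rw [aux_same'] at h1'
        have h2 := aux_card_sd s t
        rw [hs, ht] at h2
        omega
end

section
/- For every k ≥ 2, the middle cube graph MQ_k is a boundary graph; that is, with distinct adjacency eigenvalues λ_0 > λ_1 > … > λ_{2k−1} given by λ_i = k−i and λ_{k+i} = −(i+1) for 0 ≤ i < k, and π_i = ∏_{j≠i} |λ_i − λ_j|, one has ∑_{i=0}^{2k−1} π_0/π_i = 2·C(2k−1, k), the number of vertices of MQ_k. -/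
open Finset SimpleGraph

open Nat

lemma asc_prod (m : ℕ) : ∀ n : ℕ, (∏ j ∈ range n, (m + 1 + j)) = (m+1).ascFactorial n
  | 0 => by simp
  | n+1 => by rw [prod_range_succ, asc_prod m n, Nat.ascFactorial_succ, mul_comm]

lemma fact_prod_sub (n : ℕ) : (∏ j ∈ range n, (n - j)) = n ! := by
  rw [← Finset.prod_range_reflect (fun j => n - j) n,
    ← Finset.prod_range_add_one_eq_factorial]
  exact Finset.prod_congr rfl fun j hj => by
    have := Finset.mem_range.mp hj; omega

lemma asc_prod_sub (i n : ℕ) : (∏ j ∈ range n, (n - j + i + 1)) = (i+2).ascFactorial n := by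
  rw [← Finset.prod_range_reflect (fun j => n - j + i + 1) n, ← asc_prod (i+1) n]
  exact Finset.prod_congr rfl fun j hj => by
    have := Finset.mem_range.mp hj; omega

/-- `∏_{j<n, j≠i} |i - j| = i! (n-1-i)!` in the reals. -/
lemma prodA (n i : ℕ) (h : i < n) :
    (∏ j ∈ range n, (if j = i then (1:ℝ) else |(i:ℝ) - j|))
      = ((i ! * (n-1-i)! : ℕ) : ℝ) := by
  obtain ⟨b, rfl⟩ : ∃ b, n = i + (b + 1) := ⟨n - 1 - i, by omega⟩
  rw [Finset.prod_range_add]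
  have h1 : (∏ j ∈ range i, (if j = i then (1:ℝ) else |(i:ℝ) - j|))
      = ((i ! : ℕ) : ℝ) := by
    rw [← fact_prod_sub i, Nat.cast_prod]
    refine Finset.prod_congr rfl fun j hj => ?_
    have hji := Finset.mem_range.mp hj
    rw [if_neg (by omega), abs_of_nonneg (by
      have : (j:ℝ) ≤ i := by exact_mod_cast hji.le
      linarith), Nat.cast_sub hji.le]
  have h2 : (∏ j ∈ range (b+1), (if i + j = i then (1:ℝ) else |(i:ℝ) - (i + j)|))
      = ((b ! : ℕ) : ℝ) := by
    rw [Finset.prod_range_succ', ← Finset.prod_range_add_one_eq_factorial, Nat.cast_prod]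
    rw [if_pos (show i + 0 = i by omega), mul_one]
    refine Finset.prod_congr rfl fun j hj => ?_
    rw [if_neg (by omega)]
    push_cast
    rw [abs_of_nonpos (by linarith)]
    push_cast
    ring
  rw [h1]
  push_cast at h2 ⊢
  rw [show i + (b+1) - 1 - i = b by omega]
  rw [h2]

lemma key (i a : ℕ) :
    (a+1) * ((2*(i+a+1)).choose (i+2*a+2)) * (i ! * (a ! * (a+2).ascFactorial (i+a+1)))
    = (i+a+1) * ((i+a)! * (i+a+2).ascFactorial (i+a+1)) := by
  have hpos : 0 < (a+1)! * (i+a+1)! := by positivity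
  apply Nat.eq_of_mul_eq_mul_right hpos
  have h1 := Nat.factorial_mul_ascFactorial (a+1) (i+a+1)
  have h2 := Nat.factorial_mul_ascFactorial (i+a+1) (i+a+1)
  rw [show a+1+(i+a+1) = i+2*a+2 by omega, show a+1+1 = a+2 by omega] at h1
  rw [show i+a+1+(i+a+1) = 2*(i+a+1) by omega, show i+a+1+1 = i+a+2 by omega] at h2
  have h3 := Nat.choose_mul_factorial_mul_factorial (show i+2*a+2 ≤ 2*(i+a+1) by omega)
  rw [show 2*(i+a+1) - (i+2*a+2) = i by omega] at h3
  have h4 : (a+1)! = (a+1) * a ! := Nat.factorial_succ a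
  have h5 : (i+a+1)! = (i+a+1) * (i+a)! := Nat.factorial_succ (i+a)
  calc ((a+1) * ((2*(i+a+1)).choose (i+2*a+2)) * (i ! * (a ! * (a+2).ascFactorial (i+a+1))))
        * ((a+1)! * (i+a+1)!)
      = ((2*(i+a+1)).choose (i+2*a+2) * ((a+1)! * (a+2).ascFactorial (i+a+1)) * i !)
          * (((a+1) * a !) * (i+a+1)!) := by ring
    _ = ((2*(i+a+1)).choose (i+2*a+2) * (i+2*a+2)! * i !) * ((a+1)! * (i+a+1)!) := by
          rw [h1, ← h4]
    _ = (2*(i+a+1))! * ((a+1)! * (i+a+1)!) := by rw [h3]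
    _ = ((i+a+1) * ((i+a)! * (i+a+2).ascFactorial (i+a+1))) * ((a+1)! * (i+a+1)!) := by
          rw [← h2, h5]; ring

lemma tel (k : ℕ) (hk : 1 ≤ k) : ∀ t, t ≤ k →
    (∑ i ∈ range t, ((i+1) * ((2*k).choose (k+i+1)) : ℤ))
      = k * ((2*k-1).choose k) - k * ((2*k-1).choose (k+t))
  | 0, _ => by simp
  | t+1, ht => by
    rw [sum_range_succ, tel k hk t (by omega)]
    have hp : (2*k).choose (k+t+1) = (2*k-1).choose (k+t) + (2*k-1).choose (k+t+1) := by
      have := Nat.choose_succ_succ (2*k-1) (k+t)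
      simp only [Nat.succ_eq_add_one] at this
      rwa [show 2*k-1+1 = 2*k by omega] at this
    have hs := Nat.add_one_mul_choose_eq (2*k-1) (k+t)
    rw [show 2*k-1+1 = 2*k by omega] at hs
    have hp' : ((2*k).choose (k+t+1) : ℤ)
        = (2*k-1).choose (k+t) + (2*k-1).choose (k+t+1) := by exact_mod_cast hp
    have hs' : (2*k : ℤ) * (2*k-1).choose (k+t) = (2*k).choose ((k+t).succ) * ((k+t).succ) := by
      exact_mod_cast hs
    push_cast [Nat.succ_eq_add_one] at hs'
    rw [show k + (t+1) = k+t+1 by omega]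
    push_cast
    linear_combination -hs' - (k : ℤ) * hp'

lemma sumS (k : ℕ) (hk : 1 ≤ k) :
    (∑ i ∈ range k, (i+1) * ((2*k).choose (k+i+1))) = k * ((2*k-1).choose k) := by
  have h := tel k hk k le_rfl
  rw [Nat.choose_eq_zero_of_lt (show 2*k-1 < k+k by omega)] at h
  simp only [Nat.cast_zero, mul_zero, sub_zero] at h
  exact_mod_cast h

lemma sumS' (k : ℕ) (hk : 1 ≤ k) :
    (∑ i ∈ range k, (k-i) * ((2*k).choose (2*k-i))) = k * ((2*k-1).choose k) := by
  rw [← sumS k hk, ← Finset.sum_range_reflect (fun i => (i+1) * ((2*k).choose (k+i+1))) k]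
  refine Finset.sum_congr rfl fun j hj => ?_
  have hjk := Finset.mem_range.mp hj
  congr 1
  · omega
  · congr 1; omega

def wtEquiv (n w : ℕ) : {x : Fin n → Bool // wt x = w} ≃ {s : Finset (Fin n) // s.card = w} where
  toFun x := ⟨Finset.univ.filter fun i => x.1 i = true, x.2⟩
  invFun s := ⟨fun i => decide (i ∈ s.1), by
    have : (Finset.univ.filter fun i => decide (i ∈ s.1) = true) = s.1 := by
      ext i; simp
    simp only [wt, this, s.2]⟩
  left_inv x := by
    ext i
    simp
  right_inv s := by
    ext i
    simp

lemma card_wt (n w : ℕ) : Fintype.card {x : Fin n → Bool // wt x = w} = n.choose w := by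
  rw [Fintype.card_congr (wtEquiv n w), Fintype.card_finset_len, Fintype.card_fin]

lemma card_count (k : ℕ) (hk : 2 ≤ k) :
    Fintype.card {x : Fin (2 * k - 1) → Bool // wt x = k - 1 ∨ wt x = k} =
      2 * Nat.choose (2 * k - 1) k := by
  have hd : Disjoint (fun x : Fin (2*k-1) → Bool => wt x = k - 1) (fun x => wt x = k) := by
    rw [Pi.disjoint_iff]
    intro x
    rw [Prop.disjoint_iff]
    omega
  rw [Fintype.card_subtype_or_disjoint _ _ hd, card_wt, card_wt]
  have : (2*k-1).choose (k-1) = (2*k-1).choose k := by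
    rw [← Nat.choose_symm (show k ≤ 2*k-1 by omega), show 2*k-1-k = k-1 by omega]
  omega

/-- The middle cube graph `MQ_k` is a boundary graph: with its distinct
adjacency eigenvalues `λ_i = k - i`, `λ_{k+i} = -(i+1)` for `0 ≤ i < k`, and
`π_i = ∏_{j ≠ i} |λ_i - λ_j|`, one has
`∑_{i=0}^{2k-1} π_0 / π_i = 2·C(2k-1, k)`, the number of vertices of `MQ_k`. -/
theorem middleCube_boundary (k : ℕ) (hk : 2 ≤ k)
    (lam : Fin (2 * k) → ℝ)
    (hlam₁ : ∀ i : ℕ, ∀ hi : i < k, lam ⟨i, by omega⟩ = (k : ℝ) - i)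
    (hlam₂ : ∀ i : ℕ, ∀ hi : i < k, lam ⟨k + i, by omega⟩ = -((i : ℝ) + 1))
    (pi : Fin (2 * k) → ℝ)
    (hpi : ∀ i, pi i = ∏ j ∈ Finset.univ.erase i, |lam i - lam j|) :
    (∑ i : Fin (2 * k), pi ⟨0, by omega⟩ / pi i = 2 * Nat.choose (2 * k - 1) k) ∧
    Fintype.card {x : Fin (2 * k - 1) → Bool // wt x = k - 1 ∨ wt x = k} =
      2 * Nat.choose (2 * k - 1) k := by
  have hk0 : 0 < k := by omega
  set lamv : ℕ → ℝ := fun m => if m < k then (k:ℝ) - m else -(((m - k : ℕ):ℝ) + 1) with hlamv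
  have hl : ∀ m (hm : m < 2*k), lam ⟨m, hm⟩ = lamv m := by
    intro m hm
    by_cases h : m < k
    · rw [hlamv]; simp only [if_pos h]; exact hlam₁ m h
    · have hm' : (⟨m, hm⟩ : Fin (2*k)) = ⟨k + (m-k), by omega⟩ := Fin.ext (by simp; omega)
      rw [hlamv]; simp only [if_neg h]
      rw [hm']
      exact hlam₂ (m-k) (by omega)
  have hpi' : ∀ i : Fin (2*k),
      pi i = ∏ j ∈ range (2*k), (if j = i.val then (1:ℝ) else |lamv i.val - lamv j|) := by
    intro i
    rw [hpi i]
    have e1 : (∏ j ∈ Finset.univ.erase i, |lam i - lam j|)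
        = ∏ j ∈ Finset.univ.erase i,
            (fun m : Fin (2*k) =>
              if m.val = i.val then (1:ℝ) else |lamv i.val - lamv m.val|) j := by
      refine Finset.prod_congr rfl fun j hj => ?_
      have hji : j ≠ i := (Finset.mem_erase.mp hj).1
      simp only [if_neg (fun h => hji (Fin.ext h))]
      rw [← hl i.val i.isLt, ← hl j.val j.isLt, Fin.eta, Fin.eta]
    rw [e1, Finset.prod_erase _ (by simp)]
    exact Fin.prod_univ_eq_prod_range
      (fun m => if m = i.val then (1:ℝ) else |lamv i.val - lamv m|) (2*k)
  -- value of pi at a positive-eigenvalue index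
  have hkey1 : ∀ (i : ℕ) (hi2 : i < 2*k) (hik : i < k),
      pi ⟨i, hi2⟩ = ((i ! * ((k-1-i)! * (k-i+1).ascFactorial k) : ℕ) : ℝ) := by
    intro i hi2 hik
    rw [hpi' ⟨i, hi2⟩]
    simp only []
    rw [two_mul, Finset.prod_range_add]
    have e1 : (∏ j ∈ range k, (if j = i then (1:ℝ) else |lamv i - lamv j|))
        = ((i ! * (k-1-i)! : ℕ) : ℝ) := by
      rw [← prodA k i hik]
      refine Finset.prod_congr rfl fun j hj => ?_
      have hjk := Finset.mem_range.mp hj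
      by_cases h : j = i
      · rw [if_pos h, if_pos h]
      · rw [if_neg h, if_neg h, hlamv]
        simp only [if_pos hjk, if_pos hik]
        rw [show (k:ℝ) - i - ((k:ℝ) - j) = -((i:ℝ) - j) by ring, abs_neg]
    have e2 : (∏ j ∈ range k, (if k + j = i then (1:ℝ) else |lamv i - lamv (k+j)|))
        = (((k-i+1).ascFactorial k : ℕ) : ℝ) := by
      rw [← asc_prod (k-i) k, Nat.cast_prod]
      refine Finset.prod_congr rfl fun j hj => ?_
      have hjk := Finset.mem_range.mp hj
      rw [if_neg (by omega), hlamv]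
      simp only [if_pos hik, if_neg (show ¬ k + j < k by omega)]
      rw [show k + j - k = j by omega]
      rw [abs_of_nonneg (by
        have h1 : (i:ℝ) ≤ k := by exact_mod_cast hik.le
        have h2 : (0:ℝ) ≤ j := by positivity
        linarith)]
      rw [show k - i + 1 + j = k - i + (1 + j) by omega, Nat.cast_add,
        Nat.cast_sub hik.le]
      push_cast
      ring
    rw [e1, e2]
    push_cast
    ring
  -- value of pi at a negative-eigenvalue index
  have hkey2 : ∀ (i : ℕ) (hi2 : k + i < 2*k) (hik : i < k),
      pi ⟨k+i, hi2⟩ = ((i ! * ((k-1-i)! * (i+2).ascFactorial k) : ℕ) : ℝ) := by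
    intro i hi2 hik
    rw [hpi' ⟨k+i, hi2⟩]
    simp only []
    rw [two_mul, Finset.prod_range_add]
    have e1 : (∏ j ∈ range k, (if j = k + i then (1:ℝ) else |lamv (k+i) - lamv j|))
        = (((i+2).ascFactorial k : ℕ) : ℝ) := by
      rw [← asc_prod_sub i k, Nat.cast_prod]
      refine Finset.prod_congr rfl fun j hj => ?_
      have hjk := Finset.mem_range.mp hj
      rw [if_neg (by omega), hlamv]
      simp only [if_pos hjk, if_neg (show ¬ k + i < k by omega)]
      rw [show k + i - k = i by omega]
      rw [abs_of_nonpos (by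
        have h1 : (j:ℝ) ≤ k := by exact_mod_cast hjk.le
        have h2 : (0:ℝ) ≤ i := by positivity
        linarith)]
      rw [show k - j + i + 1 = (k - j) + (i + 1) by omega, Nat.cast_add,
        Nat.cast_sub hjk.le]
      push_cast
      ring
    have e2 : (∏ j ∈ range k, (if k + j = k + i then (1:ℝ) else |lamv (k+i) - lamv (k+j)|))
        = ((i ! * (k-1-i)! : ℕ) : ℝ) := by
      rw [← prodA k i hik]
      refine Finset.prod_congr rfl fun j hj => ?_
      have hjk := Finset.mem_range.mp hj
      by_cases h : j = i
      · rw [if_pos (by omega), if_pos h]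
      · rw [if_neg (by omega), if_neg h, hlamv]
        simp only [if_neg (show ¬ k + i < k by omega), if_neg (show ¬ k + j < k by omega)]
        rw [show k + i - k = i by omega, show k + j - k = j by omega]
        rw [show -(((i:ℕ):ℝ) + 1) - -(((j:ℕ):ℝ) + 1) = -((i:ℝ) - j) by ring, abs_neg]
    rw [e1, e2]
    push_cast
    ring
  have h02k : 0 < 2*k := by omega
  have hdiv1 : ∀ (i : ℕ) (hi2 : i < 2*k) (hik : i < k),
      pi ⟨0, h02k⟩ / pi ⟨i, hi2⟩
        = (((k-i) * ((2*k).choose (2*k-i)) : ℕ) : ℝ) / (k:ℝ) := by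
    intro i hi2 hik
    rw [hkey1 0 h02k hk0, hkey1 i hi2 hik]
    simp only [Nat.factorial_zero, one_mul, Nat.sub_zero]
    have hasc : 0 < (k-i+1).ascFactorial k := Nat.ascFactorial_pos (k-i) k
    have hPpos : (0:ℝ) < ((i ! * ((k-1-i)! * (k-i+1).ascFactorial k) : ℕ) : ℝ) := by
      have : 0 < i ! * ((k-1-i)! * (k-i+1).ascFactorial k) :=
        Nat.mul_pos (Nat.factorial_pos i) (Nat.mul_pos (Nat.factorial_pos _) hasc)
      exact_mod_cast this
    rw [div_eq_div_iff hPpos.ne' (show (k:ℝ) ≠ 0 by positivity)]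
    have e := key i (k-1-i)
    rw [show i+(k-1-i)+1 = k by omega, show i+(k-1-i)+2 = k+1 by omega,
        show i+2*(k-1-i)+2 = 2*k-i by omega, show (k-1-i)+1 = k-i by omega,
        show (k-1-i)+2 = k-i+1 by omega, show i+(k-1-i) = k-1 by omega] at e
    have e' : ((k-1)! * (k+1).ascFactorial k) * k
        = ((k-i) * ((2*k).choose (2*k-i))) * (i ! * ((k-1-i)! * (k-i+1).ascFactorial k)) := by
      rw [e]; ring
    exact_mod_cast e'
  have hdiv2 : ∀ (i : ℕ) (hi2 : k + i < 2*k) (hik : i < k),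
      pi ⟨0, h02k⟩ / pi ⟨k+i, hi2⟩
        = (((i+1) * ((2*k).choose (k+i+1)) : ℕ) : ℝ) / (k:ℝ) := by
    intro i hi2 hik
    rw [hkey1 0 h02k hk0, hkey2 i hi2 hik]
    simp only [Nat.factorial_zero, one_mul, Nat.sub_zero]
    have hasc : 0 < (i+2).ascFactorial k := by
      have := Nat.ascFactorial_pos (i+1) k
      rwa [show i+1+1 = i+2 by omega] at this
    have hPpos : (0:ℝ) < ((i ! * ((k-1-i)! * (i+2).ascFactorial k) : ℕ) : ℝ) := by
      have : 0 < i ! * ((k-1-i)! * (i+2).ascFactorial k) :=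
        Nat.mul_pos (Nat.factorial_pos i) (Nat.mul_pos (Nat.factorial_pos _) hasc)
      exact_mod_cast this
    rw [div_eq_div_iff hPpos.ne' (show (k:ℝ) ≠ 0 by positivity)]
    have e := key (k-1-i) i
    rw [show (k-1-i)+i+1 = k by omega, show (k-1-i)+i+2 = k+1 by omega,
        show (k-1-i)+2*i+2 = k+i+1 by omega, show (k-1-i)+i = k-1 by omega] at e
    have e' : ((k-1)! * (k+1).ascFactorial k) * k
        = ((i+1) * ((2*k).choose (k+i+1))) * (i ! * ((k-1-i)! * (i+2).ascFactorial k)) := by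
      zify at e ⊢; linear_combination (-1 : ℤ) * e
    exact_mod_cast e'
  set F : ℕ → ℝ := fun m => if h : m < 2*k then pi ⟨0, h02k⟩ / pi ⟨m, h⟩ else 0 with hF
  have hFpos : ∀ j ∈ range k, F j = (((k-j) * ((2*k).choose (2*k-j)) : ℕ) : ℝ) / (k:ℝ) := by
    intro j hj
    have hjk := Finset.mem_range.mp hj
    rw [hF]
    simp only []
    rw [dif_pos (show j < 2*k by omega)]
    exact hdiv1 j _ hjk
  have hFneg : ∀ j ∈ range k,
      F (k+j) = (((j+1) * ((2*k).choose (k+j+1)) : ℕ) : ℝ) / (k:ℝ) := by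
    intro j hj
    have hjk := Finset.mem_range.mp hj
    rw [hF]
    simp only []
    rw [dif_pos (show k + j < 2*k by omega)]
    exact hdiv2 j _ hjk
  have hsum : (∑ i : Fin (2*k), pi ⟨0, h02k⟩ / pi i) = ∑ m ∈ range (2*k), F m := by
    rw [← Fin.sum_univ_eq_sum_range F (2*k)]
    refine Finset.sum_congr rfl fun i _ => ?_
    have : F i.val = pi ⟨0, h02k⟩ / pi ⟨i.val, i.isLt⟩ := by
      rw [hF]; exact dif_pos i.isLt
    rw [this, Fin.eta]
  have final : (∑ i : Fin (2*k), pi ⟨0, h02k⟩ / pi i)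
      = 2 * ((2*k-1).choose k : ℝ) := by
    rw [hsum, two_mul k, Finset.sum_range_add, ← two_mul k,
      Finset.sum_congr rfl hFpos, Finset.sum_congr rfl hFneg,
      ← Finset.sum_div, ← Finset.sum_div, ← Nat.cast_sum, ← Nat.cast_sum,
      sumS' k (by omega), sumS k (by omega)]
    have hkne : (k:ℝ) ≠ 0 := by positivity
    push_cast
    field_simp
    ring
  constructor
  · exact final
  · exact card_count k hk
end
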